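/- (Correctness of sorting positions by flip ratio.) For a Boolean sequence B : Fin l → Bool and positions u, v ∉ F(B), the one-flip successor at u has probability at least that of the one-flip successor at v if and only if V u ≥ V v; that is, P(Function.update B u (¬ B u)) ≥ P(Function.update B v (¬ B v)) ↔ V u ≥ V v. In particular, among all one-flip successors of B, the most probable one flips an unflipped position with maximal flip ratio V. -/

import Mathlib

open scoped Classical
open Finset

/-- The probability of a Boolean sequence `B`:
`P(B) = ∏ j, (if B j then pb j else 1 - pb j)`. -/
noncomputable def probSeq (l : ℕ) (pb : Fin l → ℝ) (B : Fin l → Bool) : ℝ :=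
  ∏ j, (if B j then pb j else 1 - pb j)

/-- The initial sequence `B⁰`, `B⁰ j = (pb j > 1/2)`. -/
noncomputable def initSeq (l : ℕ) (pb : Fin l → ℝ) : Fin l → Bool :=
  fun j => decide (pb j > 1 / 2)

/-- The flip set `F(B) = {j | B j ≠ B⁰ j}`. -/
noncomputable def flipSet (l : ℕ) (pb : Fin l → ℝ) (B : Fin l → Bool) : Finset (Fin l) :=
  Finset.univ.filter (fun j => B j ≠ initSeq l pb j)

/-- The flip ratio `V u = min (pb u) (1 - pb u) / max (pb u) (1 - pb u)`. -/
noncomputable def flipRatio (l : ℕ) (pb : Fin l → ℝ) (u : Fin l) : ℝ :=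
  min (pb u) (1 - pb u) / max (pb u) (1 - pb u)

lemma probSeq_pos (l : ℕ) (pb : Fin l → ℝ) (hpb : ∀ j, 0 < pb j ∧ pb j < 1)
    (B : Fin l → Bool) : 0 < probSeq l pb B := by
  apply Finset.prod_pos
  intro j _
  rcases hpb j with ⟨h1, h2⟩
  split <;> linarith

lemma probSeq_update (l : ℕ) (pb : Fin l → ℝ) (hpb : ∀ j, 0 < pb j ∧ pb j < 1)
    (B : Fin l → Bool) (u : Fin l) (hu : u ∉ flipSet l pb B) :
    probSeq l pb (Function.update B u (!B u)) = flipRatio l pb u * probSeq l pb B := by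
  rcases hpb u with ⟨h1, h2⟩
  simp only [flipSet, initSeq, Finset.mem_filter, Finset.mem_filter_univ, Finset.mem_univ, true_and, not_not,
    ne_eq] at hu
  have hu : B u = decide (pb u > 1 / 2) := by
    by_contra hc; exact hu (Finset.mem_filter.mpr ⟨Finset.mem_univ _, hc⟩)
  have key : (fun j => if Function.update B u (!B u) j then pb j else 1 - pb j)
      = Function.update (fun j => if B j then pb j else 1 - pb j) u
        (if !B u then pb u else 1 - pb u) := by
    funext j
    by_cases hj : j = u
    · subst hj; simp
    · simp [Function.update_of_ne hj]
  have h1' : probSeq l pb (Function.update B u (!B u))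
      = (if !B u then pb u else 1 - pb u) * ∏ j ∈ Finset.univ \ {u},
          (if B j then pb j else 1 - pb j) := by
    rw [probSeq, key, Finset.prod_update_of_mem (Finset.mem_univ u)]
  have h2' : probSeq l pb B
      = (if B u then pb u else 1 - pb u) * ∏ j ∈ Finset.univ \ {u},
          (if B j then pb j else 1 - pb j) := by
    rw [probSeq, Finset.prod_eq_mul_prod_sdiff_singleton_of_mem (Finset.mem_univ u)]
  rw [h1', h2', ← mul_assoc]
  congr 1
  by_cases h : pb u > 1 / 2
  · have hb : B u = true := by rw [hu]; simp only [decide_eq_true_eq]; linarith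
    have hmin : min (pb u) (1 - pb u) = 1 - pb u := min_eq_right (by linarith)
    have hmax : max (pb u) (1 - pb u) = pb u := max_eq_left (by linarith)
    rw [hb, flipRatio, hmin, hmax]
    simp only [Bool.not_true, Bool.false_eq_true, if_false, if_true]
    field_simp
  · have hb : B u = false := by rw [hu]; exact decide_eq_false h
    have hmin : min (pb u) (1 - pb u) = pb u := min_eq_left (by linarith)
    have hmax : max (pb u) (1 - pb u) = 1 - pb u := max_eq_right (by linarith)
    rw [hb, flipRatio, hmin, hmax]
    norm_num
    rw [div_mul_eq_mul_div, mul_div_assoc, div_self (by linarith : (1:ℝ) - pb u ≠ 0), mul_one]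

/-- correctness of sorting positions by flip ratio: for unflipped
positions `u, v`, the one-flip successor at `u` is at least as probable as the one at
`v` iff `V u ≥ V v`; in particular, the most probable one-flip successor flips an
unflipped position with maximal flip ratio. -/
theorem flip_order_iff_ratio_order (l : ℕ) (pb : Fin l → ℝ)
    (hpb : ∀ j, 0 < pb j ∧ pb j < 1)
    (B : Fin l → Bool) (u v : Fin l)
    (hu : u ∉ flipSet l pb B) (hv : v ∉ flipSet l pb B) :
    (probSeq l pb (Function.update B u (!B u)) ≥
        probSeq l pb (Function.update B v (!B v)) ↔
      flipRatio l pb u ≥ flipRatio l pb v) ∧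
    ((∀ w ∉ flipSet l pb B, flipRatio l pb w ≤ flipRatio l pb u) →
      ∀ w ∉ flipSet l pb B,
        probSeq l pb (Function.update B w (!B w)) ≤
          probSeq l pb (Function.update B u (!B u))) := by
  have hP := probSeq_pos l pb hpb B
  constructor
  · rw [probSeq_update l pb hpb B u hu, probSeq_update l pb hpb B v hv]
    exact mul_le_mul_iff_of_pos_right hP
  · intro hmax w hw
    rw [probSeq_update l pb hpb B u hu, probSeq_update l pb hpb B w hw]
    exact mul_le_mul_of_nonneg_right (hmax w hw) hP.le
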